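/- The vertex set of the n-orthoplex, consisting of the 2n points ±e_1,...,±e_n in ℝ^n (where e_i are the standard basis vectors), is 2n-point homogeneous: any bijection between two subsets of the vertex set that preserves pairwise Euclidean distances extends to a self-isometry of the whole vertex set. -/

import Mathlib

/-- The vertex set of the `n`-orthoplex: the `2n` points `±e₁, …, ±eₙ`. -/
def orthoplexVertices (n : ℕ) : Set (EuclideanSpace ℝ (Fin n)) :=
  {x | ∃ i : Fin n, x = EuclideanSpace.single i 1 ∨ x = -EuclideanSpace.single i 1}

namespace OrthoplexAux

noncomputable section

variable {n : ℕ}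

/-- standard basis vector -/
def bv (i : Fin n) : EuclideanSpace ℝ (Fin n) := EuclideanSpace.single i 1

lemma smul_bv_apply (δ : ℝ) (i k : Fin n) :
    (δ • bv i) k = if k = i then δ else 0 := by
  simp [bv, PiLp.smul_apply, EuclideanSpace.single_apply, mul_ite, smul_eq_mul]

lemma mem_iff (x : EuclideanSpace ℝ (Fin n)) :
    x ∈ orthoplexVertices n ↔ ∃ i : Fin n, ∃ δ : ℝ, (δ = 1 ∨ δ = -1) ∧ x = δ • bv i := by
  constructor
  · rintro ⟨i, h | h⟩
    · exact ⟨i, 1, Or.inl rfl, by simpa [bv] using h⟩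
    · exact ⟨i, -1, Or.inr rfl, by simp [bv, h]⟩
  · rintro ⟨i, δ, h1 | h1, h2⟩
    · exact ⟨i, Or.inl (by simpa [bv, h1] using h2)⟩
    · exact ⟨i, Or.inr (by simp [bv, h1] at h2 ⊢; simpa using h2)⟩

lemma bv_eq_iff {i j : Fin n} {δ δ' : ℝ} (hδ : δ = 1 ∨ δ = -1) :
    δ • bv i = δ' • bv j ↔ (i = j ∧ δ = δ') := by
  constructor
  · intro h
    have hi := congrArg (fun x : EuclideanSpace ℝ (Fin n) => x i) h
    simp only [smul_bv_apply, if_pos rfl] at hi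
    have hδ0 : δ ≠ 0 := by rcases hδ with h | h <;> simp [h]
    by_cases hij : i = j
    · subst hij; simp at hi; exact ⟨rfl, hi⟩
    · rw [if_neg hij] at hi; exact absurd hi hδ0
  · rintro ⟨rfl, rfl⟩; rfl

lemma dist_formula (i j : Fin n) (δ δ' : ℝ) (hδ : δ = 1 ∨ δ = -1) (hδ' : δ' = 1 ∨ δ' = -1) :
    dist (δ • bv i) (δ' • bv j)
      = if i = j then (if δ = δ' then 0 else 2) else Real.sqrt 2 := by
  rw [EuclideanSpace.dist_eq]
  simp only [smul_bv_apply, Real.dist_eq]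
  by_cases hij : i = j
  · subst hij
    by_cases hδδ : δ = δ'
    · subst hδδ; simp
    · rw [if_pos rfl, if_neg hδδ]
      have : ∀ k : Fin n, |(if k = i then δ else 0) - (if k = i then δ' else 0)| ^ 2
          = if k = i then (δ - δ') ^ 2 else 0 := by
        intro k; by_cases h : k = i <;> simp [h, sq_abs]
      rw [Finset.sum_congr rfl fun k _ => this k, Finset.sum_ite_eq' _ i]
      have h4 : (δ - δ') ^ 2 = 4 := by
        rcases hδ with rfl | rfl <;> rcases hδ' with rfl | rfl <;>
          first | (exact absurd rfl hδδ) | norm_num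
      simp [h4]
      rw [show (4 : ℝ) = 2 ^ 2 by norm_num, Real.sqrt_sq (by norm_num)]
  · rw [if_neg hij]
    have : ∀ k : Fin n, |(if k = i then δ else 0) - (if k = j then δ' else 0)| ^ 2
        = (if k = i then δ ^ 2 else 0) + (if k = j then δ' ^ 2 else 0) := by
      intro k
      by_cases hki : k = i <;> by_cases hkj : k = j <;>
        first
          | exact absurd (hki.symm.trans hkj) hij
          | simp [hki, hkj, sq_abs, hij, (Ne.symm hij : j ≠ i)]
    rw [Finset.sum_congr rfl fun k _ => this k, Finset.sum_add_distrib,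
      Finset.sum_ite_eq' _ i, Finset.sum_ite_eq' _ j]
    have h1 : δ ^ 2 = 1 := by rcases hδ with rfl | rfl <;> norm_num
    have h2 : δ' ^ 2 = 1 := by rcases hδ' with rfl | rfl <;> norm_num
    simp [h1, h2]
    norm_num

lemma sqrt2_ne_two : Real.sqrt 2 ≠ 2 := by
  intro h
  have := Real.sq_sqrt (by norm_num : (2:ℝ) ≥ 0)
  rw [h] at this; norm_num at this

lemma sqrt2_ne_zero : Real.sqrt 2 ≠ 0 := by
  positivity

/-- antipodal lemma: two vertices at distance 2 are antipodal. -/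
lemma antipodal {u v : EuclideanSpace ℝ (Fin n)} (hu : u ∈ orthoplexVertices n)
    (hv : v ∈ orthoplexVertices n) (h : dist u v = 2) : u = -v := by
  rcases (mem_iff u).1 hu with ⟨i, δ, hδ, rfl⟩
  rcases (mem_iff v).1 hv with ⟨j, δ', hδ', rfl⟩
  rw [dist_formula i j δ δ' hδ hδ'] at h
  by_cases hij : i = j
  · subst hij
    rw [if_pos rfl] at h
    by_cases hδδ : δ = δ'
    · rw [if_pos hδδ] at h; norm_num at h
    · have : δ = -δ' := by rcases hδ with rfl | rfl <;> rcases hδ' with rfl | rfl <;>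
        first | (exact absurd rfl hδδ) | norm_num
      rw [this, ← neg_smul]
  · rw [if_neg hij] at h
    exact absurd h sqrt2_ne_two

lemma pm_mul {a b : ℝ} (ha : a = 1 ∨ a = -1) (hb : b = 1 ∨ b = -1) :
    a * b = 1 ∨ a * b = -1 := by
  rcases ha with rfl | rfl <;> rcases hb with rfl | rfl <;> norm_num

lemma exists_perm_extend (p : Fin n → Prop) [DecidablePred p]
    (σ : Fin n → Fin n) (hinj : ∀ i j, p i → p j → σ i = σ j → i = j) :
    ∃ π : Equiv.Perm (Fin n), ∀ i, p i → π i = σ i := by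
  classical
  set q : Fin n → Prop := fun j => ∃ i, p i ∧ σ i = j with hq
  have hbij : Function.Bijective (fun i : {i // p i} => (⟨σ i, i, i.2, rfl⟩ : {j // q j})) := by
    constructor
    · rintro ⟨i, hi⟩ ⟨j, hj⟩ h
      simp only [Subtype.mk.injEq] at h
      exact Subtype.ext (hinj i j hi hj h)
    · rintro ⟨j, i, hi, rfl⟩
      exact ⟨⟨i, hi⟩, rfl⟩
  set e1 : {i // p i} ≃ {j // q j} := Equiv.ofBijective _ hbij with he1
  have hcard : Fintype.card {i // ¬ p i} = Fintype.card {j // ¬ q j} := by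
    rw [Fintype.card_subtype_compl, Fintype.card_subtype_compl, Fintype.card_congr e1]
  refine ⟨Equiv.subtypeCongr e1 (Fintype.equivOfCardEq hcard), ?_⟩
  intro i hi
  simp only [Equiv.subtypeCongr, Equiv.trans_apply, Equiv.sumCompl_symm_apply_of_pos hi,
    Equiv.sumCongr_apply, Sum.map_inl, Equiv.sumCompl_apply_inl]
  rfl

end

end OrthoplexAux

/-- The vertex set of the `n`-orthoplex is `2n`-point homogeneous: any
distance-preserving injection between subsets of the vertex set extends to a
self-isometry of the whole vertex set. -/
theorem stmt12 (n : ℕ) (S : Set (EuclideanSpace ℝ (Fin n)))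
    (hS : S ⊆ orthoplexVertices n)
    (f : EuclideanSpace ℝ (Fin n) → EuclideanSpace ℝ (Fin n))
    (hfS : f '' S ⊆ orthoplexVertices n) (hinj : Set.InjOn f S)
    (hpres : ∀ x ∈ S, ∀ y ∈ S, dist (f x) (f y) = dist x y) :
    ∃ g : EuclideanSpace ℝ (Fin n) → EuclideanSpace ℝ (Fin n),
      Set.BijOn g (orthoplexVertices n) (orthoplexVertices n) ∧
      (∀ x ∈ orthoplexVertices n, ∀ y ∈ orthoplexVertices n,
        dist (g x) (g y) = dist x y) ∧
      ∀ x ∈ S, g x = f x := by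
  classical
  open OrthoplexAux in
  -- the indices touched by S
  set P : Fin n → Prop := fun i => bv i ∈ S ∨ -bv i ∈ S with hP
  -- a sign choosing a representative in S
  set D : Fin n → ℝ := fun i => if bv i ∈ S then 1 else -1 with hD
  have hDpm : ∀ i, D i = 1 ∨ D i = -1 := by
    intro i; by_cases h : bv i ∈ S <;> simp [hD, h]
  set xr : Fin n → EuclideanSpace ℝ (Fin n) := fun i => D i • bv i with hxrdef
  have hxr : ∀ i, P i → xr i ∈ S := by
    intro i hi
    by_cases h : bv i ∈ S
    · simpa [hxrdef, hD, h] using h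
    · rcases hi with h' | h'
      · exact absurd h' h
      · simpa [hxrdef, hD, h] using h'
  set w : Fin n → EuclideanSpace ℝ (Fin n) := fun i => D i • f (xr i) with hwdef
  have hDD : ∀ (i : Fin n) (v : EuclideanSpace ℝ (Fin n)), D i • D i • v = v := by
    intro i v
    rw [smul_smul]
    rcases hDpm i with h | h <;> simp [h]
  have hfx : ∀ i : Fin n, f (xr i) = D i • w i := by
    intro i
    simp only [hwdef]
    exact (hDD i _).symm
  have hwV : ∀ i, P i → w i ∈ orthoplexVertices n := by
    intro i hi
    have hf : f (xr i) ∈ orthoplexVertices n := hfS ⟨xr i, hxr i hi, rfl⟩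
    rcases (mem_iff _).1 hf with ⟨j, δ, hδ, hx⟩
    refine (mem_iff _).2 ⟨j, D i * δ, pm_mul (hDpm i) hδ, ?_⟩
    simp only [hwdef]
    rw [hx, smul_smul]
  have hcons : ∀ (i : Fin n) (δ : ℝ), (δ = 1 ∨ δ = -1) → δ • bv i ∈ S →
      f (δ • bv i) = δ • w i := by
    intro i δ hδ hmemS
    have hPi : P i := by
      rcases hδ with rfl | rfl
      · exact Or.inl (by rwa [← one_smul ℝ (bv i)])
      · exact Or.inr (by rwa [← neg_one_smul ℝ (bv i)])
    by_cases hdi : δ = D i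
    · rw [hdi]
      show f (xr i) = D i • w i
      exact hfx i
    · have hdi' : δ = -D i := by
        rcases hδ with rfl | rfl <;> rcases hDpm i with h | h <;> rw [h] <;>
          first | (exact absurd h.symm hdi) | norm_num
      have h1 : xr i ∈ S := hxr i hPi
      have h2 : dist (f (xr i)) (f (δ • bv i)) = 2 := by
        rw [hpres _ h1 _ hmemS]
        show dist (D i • bv i) (δ • bv i) = 2
        rw [dist_formula i i (D i) δ (hDpm i) hδ, if_pos rfl,
          if_neg (fun hh => hdi hh.symm)]
      have h3 := antipodal (hfS ⟨_, h1, rfl⟩) (hfS ⟨_, hmemS, rfl⟩) h2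
      have h4 : f (δ • bv i) = -f (xr i) := by rw [h3, neg_neg]
      rw [h4, hfx i, hdi', neg_smul]
  have hchoice : ∀ i : Fin n, ∃ j : Fin n, ∃ e : ℝ,
      (e = 1 ∨ e = -1) ∧ (P i → w i = e • bv j) := by
    intro i
    by_cases hi : P i
    · rcases (mem_iff _).1 (hwV i hi) with ⟨j, e, he, hwv⟩
      exact ⟨j, e, he, fun _ => hwv⟩
    · exact ⟨i, 1, Or.inl rfl, fun h => absurd h hi⟩
  choose σ ε hε hw using hchoice
  have hσinj : ∀ i j, P i → P j → σ i = σ j → i = j := by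
    intro i j hi hj hσ
    by_contra hij
    have h1 : dist (f (xr i)) (f (xr j)) = Real.sqrt 2 := by
      rw [hpres _ (hxr i hi) _ (hxr j hj)]
      show dist (D i • bv i) (D j • bv j) = Real.sqrt 2
      rw [dist_formula i j (D i) (D j) (hDpm i) (hDpm j), if_neg hij]
    rw [hfx i, hfx j, hw i hi, hw j hj, hσ, smul_smul, smul_smul,
      dist_formula (σ j) (σ j) _ _ (pm_mul (hDpm i) (hε i)) (pm_mul (hDpm j) (hε j)),
      if_pos rfl] at h1
    by_cases hc : D i * ε i = D j * ε j
    · rw [if_pos hc] at h1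
      exact sqrt2_ne_zero h1.symm
    · rw [if_neg hc] at h1
      exact sqrt2_ne_two h1.symm
  obtain ⟨π, hπ⟩ := exists_perm_extend P σ hσinj
  set g : EuclideanSpace ℝ (Fin n) → EuclideanSpace ℝ (Fin n) :=
    fun x => WithLp.toLp 2 (fun j => ε (π.symm j) * x (π.symm j)) with hg
  have gapp : ∀ (x : EuclideanSpace ℝ (Fin n)) (j : Fin n),
      g x j = ε (π.symm j) * x (π.symm j) := fun x j => rfl
  have gval : ∀ (δ : ℝ) (i : Fin n), g (δ • bv i) = (δ * ε i) • bv (π i) := by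
    intro δ i
    ext j
    rw [gapp]
    rw [smul_bv_apply, smul_bv_apply]
    by_cases hj : j = π i
    · subst hj
      simp [Equiv.symm_apply_apply, mul_comm]
    · have hne : π.symm j ≠ i := fun h => hj (by rw [← h, Equiv.apply_symm_apply])
      rw [if_neg hne, if_neg hj, mul_zero]
  have gdist : ∀ x y, dist (g x) (g y) = dist x y := by
    intro x y
    rw [EuclideanSpace.dist_eq, EuclideanSpace.dist_eq]
    congr 1
    rw [← Equiv.sum_comp π.symm (fun k => dist (x k) (y k) ^ 2)]
    refine Finset.sum_congr rfl fun j _ => ?_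
    rw [gapp, gapp]
    have : dist (ε (π.symm j) * x (π.symm j)) (ε (π.symm j) * y (π.symm j))
        = dist (x (π.symm j)) (y (π.symm j)) := by
      rw [Real.dist_eq, Real.dist_eq, ← mul_sub, abs_mul]
      rcases hε (π.symm j) with h | h <;> rw [h] <;> simp
    rw [this]
  refine ⟨g, ⟨?_, ?_, ?_⟩, fun x hx y hy => gdist x y, ?_⟩
  · intro x hx
    rcases (mem_iff x).1 hx with ⟨i, δ, hδ, rfl⟩
    rw [gval]
    exact (mem_iff _).2 ⟨π i, δ * ε i, pm_mul hδ (hε i), rfl⟩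
  · intro x _ y _ hxy
    have h0 := gdist x y
    rw [hxy, dist_self] at h0
    exact dist_eq_zero.1 h0.symm
  · intro v hv
    rcases (mem_iff v).1 hv with ⟨k, δ, hδ, rfl⟩
    refine ⟨(δ * ε (π.symm k)) • bv (π.symm k),
      (mem_iff _).2 ⟨_, _, pm_mul hδ (hε _), rfl⟩, ?_⟩
    rw [gval, Equiv.apply_symm_apply]
    congr 1
    rcases hε (π.symm k) with h | h <;> rw [h] <;> ring
  · intro x hxS
    rcases (mem_iff x).1 (hS hxS) with ⟨i, δ, hδ, rfl⟩
    have hPi : P i := by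
      rcases hδ with rfl | rfl
      · exact Or.inl (by rwa [← one_smul ℝ (bv i)])
      · exact Or.inr (by rwa [← neg_one_smul ℝ (bv i)])
    rw [gval, hcons i δ hδ hxS, hw i hPi, hπ i hPi, smul_smul]
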